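/- Statically ordered logic programs satisfy Principle I: if (Π, <) is a statically ordered program, X₁ and X₂ are two (regular) answer sets of Π generated by R ∪ {r₁} and R ∪ {r₂} respectively (where r₁, r₂ ∉ R), and r₁ < r₂, then X₁ is not a preferred answer set of (Π, <). -/

import Mathlib

attribute [local instance] Classical.propDecidable

/-! ## Basic framework: extended logic programs under answer set semantics -/

/-- A literal: an atom or a classically negated atom. -/
inductive Lit (σ : Type) : Type
  | pos (a : σ)
  | neg (a : σ)
  deriving DecidableEq

/-- An extended rule: head ← pbody, not nbody. -/
structure Rule (σ : Type) : Type where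
  head : Lit σ
  pbody : Set (Lit σ)
  nbody : Set (Lit σ)

/-- A set of literals is consistent iff it contains no complementary pair. -/
def Consistent {σ : Type} (X : Set (Lit σ)) : Prop :=
  ∀ a : σ, ¬ (Lit.pos a ∈ X ∧ Lit.neg a ∈ X)

/-- Logically closed: consistent or all literals. -/
def LogClosed {σ : Type} (X : Set (Lit σ)) : Prop :=
  Consistent X ∨ X = Set.univ

/-- A program is basic if no rule has weakly negated body literals. -/
def Basic {σ : Type} (P : Set (Rule σ)) : Prop :=
  ∀ r ∈ P, r.nbody = ∅

/-- Closure of a set of literals under a (basic) program. -/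
def ClosedUnder {σ : Type} (P : Set (Rule σ)) (X : Set (Lit σ)) : Prop :=
  ∀ r ∈ P, r.pbody ⊆ X → r.head ∈ X

/-- Th(P): smallest logically closed set closed under the basic program P. -/
def Th {σ : Type} (P : Set (Rule σ)) : Set (Lit σ) :=
  ⋂₀ {X | LogClosed X ∧ ClosedUnder P X}

/-- The immediate consequence operator T_P. -/
noncomputable def TOp {σ : Type} (P : Set (Rule σ)) (X : Set (Lit σ)) : Set (Lit σ) :=
  if _ : Consistent X then {L | ∃ r ∈ P, r.pbody ⊆ X ∧ r.head = L} else Set.univ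

/-- Iterates of the immediate consequence operator, starting from a given set. -/
def TIter {σ : Type} (P : Set (Rule σ)) (X : Set (Lit σ)) : ℕ → Set (Lit σ)
  | 0 => X
  | (i+1) => TOp P (TIter P X i)

/-- Rule r is defeated by X iff nbody(r) ∩ X ≠ ∅. -/
def Defeated {σ : Type} (r : Rule σ) (X : Set (Lit σ)) : Prop :=
  (r.nbody ∩ X).Nonempty

/-- The basic rule r⁺ obtained by deleting all weakly negated body literals. -/
def reductRule {σ : Type} (r : Rule σ) : Rule σ :=
  ⟨r.head, r.pbody, ∅⟩

/-- The Gelfond–Lifschitz reduct of P relative to X. -/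
def Reduct {σ : Type} (P : Set (Rule σ)) (X : Set (Lit σ)) : Set (Rule σ) :=
  {r' | ∃ r ∈ P, ¬ Defeated r X ∧ r' = reductRule r}

/-- X is an answer set of P iff Th(Pˣ) = X. -/
def AnswerSet {σ : Type} (P : Set (Rule σ)) (X : Set (Lit σ)) : Prop :=
  Th (Reduct P X) = X

/-- Generating rules of an answer set X from P. -/
def GR {σ : Type} (P : Set (Rule σ)) (X : Set (Lit σ)) : Set (Rule σ) :=
  {r | r ∈ P ∧ ¬ Defeated r X ∧ r.pbody ⊆ X}

/-- An enumeration of a set of rules. -/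
def IsEnum {σ I : Type} (e : I → Rule σ) (S : Set (Rule σ)) : Prop :=
  Function.Injective e ∧ Set.range e = S

/-- A grounded sequence of rules. -/
def Grounded {σ I : Type} [LT I] (e : I → Rule σ) : Prop :=
  ∀ i : I, ¬ Consistent {L | ∃ j < i, (e j).head = L} ∨
    (e i).pbody ⊆ {L | ∃ j < i, (e j).head = L}
/-! ## Ordered logic programs and the translation 𝒯 -/

/-- Atoms of the language of an ordered program: regular atoms from `α`
plus preference atoms `s ≺ t` over names from `N`. -/
abbrev OAtom (α N : Type) : Type := α ⊕ (N × N)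

/-- Atoms of the extended language ℒ⁺ of the translated program:
the original atoms plus the control atoms ap, bl, ok, ok'. -/
inductive XAtom (α N : Type) : Type
  | base (a : α)
  | prec (s t : N)
  | ap (s : N)
  | bl (s : N)
  | ok (s : N)
  | ok2 (s t : N)

/-- Map literals along a map of atoms. -/
def Lit.map {σ σ' : Type} (f : σ → σ') : Lit σ → Lit σ'
  | .pos a => .pos (f a)
  | .neg a => .neg (f a)

/-- Embedding of the atoms of the ordered program into the extended language. -/
def embAtom {α N : Type} : OAtom α N → XAtom α N
  | Sum.inl a => .base a
  | Sum.inr (s, t) => .prec s t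

/-- Embedding of literals of ℒ into ℒ⁺. -/
def embLit {α N : Type} : Lit (OAtom α N) → Lit (XAtom α N) :=
  Lit.map embAtom

/-- An ordered logic program: rules over ℒ together with an
(injective) naming function. -/
structure OProgram (α N : Type) : Type where
  rules : Set (Rule (OAtom α N))
  nm : Rule (OAtom α N) → N
  inj : Set.InjOn nm rules

section Translation

variable {α N : Type}

/-- The preference literal n ≺ n' in the translated language. -/
def pLit (s t : N) : Lit (XAtom α N) := .pos (.prec s t)

/-- a1(r) : head(r) ← ap(n_r). -/
def a1 (nm : Rule (OAtom α N) → N) (r : Rule (OAtom α N)) : Rule (XAtom α N) :=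
  ⟨embLit r.head, {.pos (.ap (nm r))}, ∅⟩

/-- a2(r) : ap(n_r) ← ok(n_r), body(r). -/
def a2 (nm : Rule (OAtom α N) → N) (r : Rule (OAtom α N)) : Rule (XAtom α N) :=
  ⟨.pos (.ap (nm r)), insert (.pos (.ok (nm r))) (embLit '' r.pbody), embLit '' r.nbody⟩

/-- b1(r, L⁺) : bl(n_r) ← ok(n_r), not L⁺, for L⁺ ∈ body⁺(r). -/
def b1 (nm : Rule (OAtom α N) → N) (r : Rule (OAtom α N)) (L : Lit (OAtom α N)) :
    Rule (XAtom α N) :=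
  ⟨.pos (.bl (nm r)), {.pos (.ok (nm r))}, {embLit L}⟩

/-- b2(r, L⁻) : bl(n_r) ← ok(n_r), L⁻, for L⁻ ∈ body⁻(r). -/
def b2 (nm : Rule (OAtom α N) → N) (r : Rule (OAtom α N)) (L : Lit (OAtom α N)) :
    Rule (XAtom α N) :=
  ⟨.pos (.bl (nm r)), {.pos (.ok (nm r)), embLit L}, ∅⟩

/-- c1(r) : ok(n_r) ← ok'(n_r, n_{r₁}), …, ok'(n_r, n_{r_k}). -/
def c1 (P : Set (Rule (OAtom α N))) (nm : Rule (OAtom α N) → N)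
    (r : Rule (OAtom α N)) : Rule (XAtom α N) :=
  ⟨.pos (.ok (nm r)), {L | ∃ r' ∈ P, L = .pos (.ok2 (nm r) (nm r'))}, ∅⟩

/-- c2(r, r') : ok'(n_r, n_{r'}) ← not (n_r ≺ n_{r'}). -/
def c2 (nm : Rule (OAtom α N) → N) (r r' : Rule (OAtom α N)) : Rule (XAtom α N) :=
  ⟨.pos (.ok2 (nm r) (nm r')), ∅, {pLit (nm r) (nm r')}⟩

/-- c3(r, r') : ok'(n_r, n_{r'}) ← (n_r ≺ n_{r'}), ap(n_{r'}). -/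
def c3 (nm : Rule (OAtom α N) → N) (r r' : Rule (OAtom α N)) : Rule (XAtom α N) :=
  ⟨.pos (.ok2 (nm r) (nm r')), {pLit (nm r) (nm r'), .pos (.ap (nm r'))}, ∅⟩

/-- c4(r, r') : ok'(n_r, n_{r'}) ← (n_r ≺ n_{r'}), bl(n_{r'}). -/
def c4 (nm : Rule (OAtom α N) → N) (r r' : Rule (OAtom α N)) : Rule (XAtom α N) :=
  ⟨.pos (.ok2 (nm r) (nm r')), {pLit (nm r) (nm r'), .pos (.bl (nm r'))}, ∅⟩

/-- t(r, r', r'') : (n_r ≺ n_{r''}) ← (n_r ≺ n_{r'}), (n_{r'} ≺ n_{r''}). -/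
def trR (nm : Rule (OAtom α N) → N) (r r' r'' : Rule (OAtom α N)) : Rule (XAtom α N) :=
  ⟨pLit (nm r) (nm r''), {pLit (nm r) (nm r'), pLit (nm r') (nm r'')}, ∅⟩

/-- as(r, r') : ¬(n_{r'} ≺ n_r) ← (n_r ≺ n_{r'}). -/
def asR (nm : Rule (OAtom α N) → N) (r r' : Rule (OAtom α N)) : Rule (XAtom α N) :=
  ⟨.neg (.prec (nm r') (nm r)), {pLit (nm r) (nm r')}, ∅⟩

/-- The translation 𝒯 of an ordered logic program. -/
def Tsl (P : OProgram α N) : Set (Rule (XAtom α N)) :=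
  {R | ∃ r ∈ P.rules,
      R = a1 P.nm r ∨ R = a2 P.nm r ∨ R = c1 P.rules P.nm r ∨
      (∃ L ∈ r.pbody, R = b1 P.nm r L) ∨ (∃ L ∈ r.nbody, R = b2 P.nm r L) ∨
      (∃ r' ∈ P.rules,
        R = c2 P.nm r r' ∨ R = c3 P.nm r r' ∨ R = c4 P.nm r r' ∨ R = asR P.nm r r' ∨
        (∃ r'' ∈ P.rules, R = trR P.nm r r' r''))}

/-- X is a preferred answer set of the ordered program P iff
X = Y ∩ ℒ for some answer set Y of 𝒯(P). -/
def PreferredAS (P : OProgram α N) (X : Set (Lit (OAtom α N))) : Prop :=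
  ∃ Y : Set (Lit (XAtom α N)), AnswerSet (Tsl P) Y ∧ X = embLit ⁻¹' Y

/-- A literal over ℒ mentions no preference atom. -/
def PrecFree (L : Lit (OAtom α N)) : Prop :=
  ∃ a : α, L = .pos (Sum.inl a) ∨ L = .neg (Sum.inl a)

/-- A rule over ℒ mentions no preference atom. -/
def PrecFreeRule (r : Rule (OAtom α N)) : Prop :=
  PrecFree r.head ∧ (∀ L ∈ r.pbody, PrecFree L) ∧ (∀ L ∈ r.nbody, PrecFree L)

/-- The fact (n_r ≺ n_{r'}) ← . -/
def precFact (nm : Rule (OAtom α N) → N) (r r' : Rule (OAtom α N)) :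
    Rule (OAtom α N) :=
  ⟨.pos (Sum.inr (nm r, nm r')), ∅, ∅⟩

/-- The statically ordered program (Π, <) viewed as the ordered program
Π ∪ { (n_r ≺ n_{r'}) ← ∣ r < r' }. -/
def statProgram (P : Set (Rule (OAtom α N))) (lt : Rule (OAtom α N) → Rule (OAtom α N) → Prop)
    (nm : Rule (OAtom α N) → N)
    (hinj : Set.InjOn nm (P ∪ {s | ∃ r ∈ P, ∃ r' ∈ P, lt r r' ∧ s = precFact nm r r'})) :
    OProgram α N :=
  ⟨P ∪ {s | ∃ r ∈ P, ∃ r' ∈ P, lt r r' ∧ s = precFact nm r r'}, nm, hinj⟩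

/-- X is a preferred answer set of the statically ordered program (Π, <):
X is the restriction to the original (preference-free) language ℒ of an
answer set of the translation of Π ∪ { (n_r ≺ n_{r'}) ← ∣ r < r' }. -/
def StatPreferredAS (P : Set (Rule (OAtom α N)))
    (lt : Rule (OAtom α N) → Rule (OAtom α N) → Prop)
    (nm : Rule (OAtom α N) → N)
    (hinj : Set.InjOn nm (P ∪ {s | ∃ r ∈ P, ∃ r' ∈ P, lt r r' ∧ s = precFact nm r r'}))
    (X : Set (Lit (OAtom α N))) : Prop :=
  ∃ Y : Set (Lit (XAtom α N)),
    AnswerSet (Tsl (statProgram P lt nm hinj)) Y ∧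
    X = {L | PrecFree L ∧ embLit L ∈ Y}

/-- The relation ≺_X induced on rules by a set X of literals of ℒ⁺. -/
def PrecRel (nm : Rule (OAtom α N) → N) (X : Set (Lit (XAtom α N)))
    (r r' : Rule (OAtom α N)) : Prop :=
  pLit (nm r) (nm r') ∈ X

/-- An answer set X of Π is <-preserving. -/
def PreservingAS (P : Set (Rule (OAtom α N)))
    (lt : Rule (OAtom α N) → Rule (OAtom α N) → Prop)
    (X : Set (Lit (OAtom α N))) : Prop :=
  AnswerSet P X ∧
    (¬ Consistent X ∨
      ∃ (I : Type) (_ : LinearOrder I) (e : I → Rule (OAtom α N)),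
        IsEnum e (GR P X) ∧ Grounded e ∧
        (∀ i j : I, lt (e i) (e j) → j < i) ∧
        (∀ i : I, ∀ r' : Rule (OAtom α N), r' ∈ P \ GR P X → lt (e i) r' →
          ¬ (r'.pbody ⊆ X) ∨ Defeated r' {L | ∃ j < i, (e j).head = L}))

/-- The rule r, viewed as a rule of the extended language ℒ⁺. -/
def embRule {α N : Type} (r : Rule (OAtom α N)) : Rule (XAtom α N) :=
  ⟨embLit r.head, embLit '' r.pbody, embLit '' r.nbody⟩

/-- An ordered program has only static preferences: every rule either mentions
no preference atom at all, or is a fact (n ≺ n') ← . -/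
def StaticallyOrdered {α N : Type} (P : OProgram α N) : Prop :=
  ∀ r ∈ P.rules, PrecFreeRule r ∨ ∃ s t : N, r = ⟨.pos (Sum.inr (s, t)), ∅, ∅⟩
section Helpers

variable {σ : Type}

lemma Consistent.mono {X Y : Set (Lit σ)} (hY : Consistent Y) (h : X ⊆ Y) : Consistent X :=
  fun a ha => hY a ⟨h ha.1, h ha.2⟩

lemma logClosed_Th (Q : Set (Rule σ)) : LogClosed (Th Q) := by
  by_cases h : ∃ X, (LogClosed X ∧ ClosedUnder Q X) ∧ Consistent X
  · obtain ⟨X, hX, hc⟩ := h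
    exact Or.inl (hc.mono (Set.sInter_subset_of_mem hX))
  · right
    apply Set.eq_univ_of_univ_subset
    intro x _
    simp only [Th, Set.mem_sInter]
    intro X hX
    rcases hX.1 with hc | hu
    · exact absurd ⟨X, hX, hc⟩ h
    · rw [hu]; trivial

lemma closedUnder_Th (Q : Set (Rule σ)) : ClosedUnder Q (Th Q) := by
  intro r hr hb
  apply Set.mem_sInter.2
  intro X hX
  exact hX.2 r hr (hb.trans (Set.sInter_subset_of_mem hX))

lemma Th_subset {Q : Set (Rule σ)} {Z : Set (Lit σ)} (h1 : LogClosed Z)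
    (h2 : ClosedUnder Q Z) : Th Q ⊆ Z :=
  Set.sInter_subset_of_mem ⟨h1, h2⟩

lemma AnswerSet.closed {Q : Set (Rule σ)} {Y : Set (Lit σ)} (h : AnswerSet Q Y) :
    ∀ r ∈ Q, ¬ Defeated r Y → r.pbody ⊆ Y → r.head ∈ Y := by
  intro r hr hd hb
  have hmem : reductRule r ∈ Reduct Q Y := ⟨r, hr, hd, rfl⟩
  have hc := closedUnder_Th (Reduct Q Y) (reductRule r) hmem
  rw [h] at hc
  exact hc hb

lemma AnswerSet.min {Q : Set (Rule σ)} {Y Z : Set (Lit σ)} (h : AnswerSet Q Y)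
    (h1 : LogClosed Z) (h2 : ClosedUnder (Reduct Q Y) Z) : Y ⊆ Z :=
  h ▸ Th_subset h1 h2

lemma AnswerSet.supported {Q : Set (Rule σ)} {Y : Set (Lit σ)} (h : AnswerSet Q Y)
    (hc : Consistent Y) :
    ∀ L ∈ Y, ∃ r ∈ Q, ¬ Defeated r Y ∧ r.pbody ⊆ Y ∧ r.head = L := by
  set C := {L | ∃ r ∈ Q, ¬ Defeated r Y ∧ r.pbody ⊆ Y ∧ r.head = L} with hC
  have hCY : C ⊆ Y := by
    rintro L ⟨r, hr, hd, hb, rfl⟩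
    exact h.closed r hr hd hb
  have hcl : ClosedUnder (Reduct Q Y) C := by
    rintro ρ ⟨r, hr, hd, rfl⟩ hb
    exact ⟨r, hr, hd, hb.trans hCY, rfl⟩
  exact fun L hL => (h.min (Or.inl (hc.mono hCY)) hcl) hL

lemma AnswerSet.cons_or_univ {Q : Set (Rule σ)} {Y : Set (Lit σ)} (h : AnswerSet Q Y) :
    Consistent Y ∨ Y = Set.univ :=
  h ▸ logClosed_Th (Reduct Q Y)

end Helpers

section EmbHelpers

variable {α N : Type}

lemma embAtom_injective : Function.Injective (embAtom (α := α) (N := N)) := by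
  rintro (a | ⟨s, t⟩) (b | ⟨u, v⟩) h <;> simp [embAtom] at h <;> simp [h]

lemma embLit_injective : Function.Injective (embLit (α := α) (N := N)) := by
  rintro (a | a) (b | b) h <;> simp [embLit, Lit.map] at h <;>
    simp [embAtom_injective h]

lemma not_precFree_inr (s t : N) :
    ¬ PrecFree (α := α) (Lit.pos (Sum.inr (s, t))) := by
  rintro ⟨a, h | h⟩ <;> simp at h

end EmbHelpers

section NeHelpers
variable {α N : Type}

lemma embLit_ne_ap (L : Lit (OAtom α N)) (s : N) : embLit L ≠ Lit.pos (XAtom.ap s) := by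
  rcases L with a | a <;> rcases a with a | ⟨u, v⟩ <;> simp [embLit, Lit.map, embAtom]

lemma embLit_ne_ok (L : Lit (OAtom α N)) (s : N) : embLit L ≠ Lit.pos (XAtom.ok s) := by
  rcases L with a | a <;> rcases a with a | ⟨u, v⟩ <;> simp [embLit, Lit.map, embAtom]

lemma embLit_ne_ok2 (L : Lit (OAtom α N)) (s t : N) :
    embLit L ≠ Lit.pos (XAtom.ok2 s t) := by
  rcases L with a | a <;> rcases a with a | ⟨u, v⟩ <;> simp [embLit, Lit.map, embAtom]

lemma embLit_ne_bl (L : Lit (OAtom α N)) (s : N) : embLit L ≠ Lit.pos (XAtom.bl s) := by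
  rcases L with a | a <;> rcases a with a | ⟨u, v⟩ <;> simp [embLit, Lit.map, embAtom]

end NeHelpers

/-- Principle I for statically ordered programs. -/
theorem principleI {α N : Type}
    (P : Set (Rule (OAtom α N))) (hpf : ∀ r ∈ P, PrecFreeRule r)
    (lt : Rule (OAtom α N) → Rule (OAtom α N) → Prop)
    (hirr : ∀ r, ¬ lt r r) (htr : Transitive lt)
    (nm : Rule (OAtom α N) → N)
    (hinj : Set.InjOn nm
      (P ∪ {s | ∃ r ∈ P, ∃ r' ∈ P, lt r r' ∧ s = precFact nm r r'}))
    (R0 : Set (Rule (OAtom α N))) (r1 r2 : Rule (OAtom α N))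
    (hr1 : r1 ∈ P) (hr2 : r2 ∈ P) (h1R : r1 ∉ R0) (h2R : r2 ∉ R0)
    (X1 X2 : Set (Lit (OAtom α N)))
    (hA1 : AnswerSet P X1) (hA2 : AnswerSet P X2)
    (hG1 : GR P X1 = R0 ∪ {r1}) (hG2 : GR P X2 = R0 ∪ {r2})
    (hlt : lt r1 r2) :
    ¬ StatPreferredAS P lt nm hinj X1 := by
  rintro ⟨Y, hYas, hX1def⟩
  have hne12 : r1 ≠ r2 := fun h => hirr r1 (h ▸ hlt)
  have hmemX1 : ∀ L, L ∈ X1 ↔ (PrecFree L ∧ embLit L ∈ Y) := fun L => by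
    rw [hX1def]; exact Iff.rfl
  have hX1cons : Consistent X1 := by
    rcases hA1.cons_or_univ with h | h
    · exact h
    · exact absurd ((hmemX1 _).1 (h ▸ Set.mem_univ
        (Lit.pos (Sum.inr (nm r1, nm r1))))).1 (not_precFree_inr _ _)
  have hYcons : Consistent Y := by
    rcases hYas.cons_or_univ with h | h
    · exact h
    · exfalso
      obtain ⟨a0, _⟩ := (hpf r1 hr1).1
      have hp : Lit.pos (Sum.inl a0) ∈ X1 :=
        (hmemX1 _).2 ⟨⟨a0, Or.inl rfl⟩, h ▸ Set.mem_univ _⟩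
      have hn : Lit.neg (Sum.inl a0) ∈ X1 :=
        (hmemX1 _).2 ⟨⟨a0, Or.inr rfl⟩, h ▸ Set.mem_univ _⟩
      exact hX1cons _ ⟨hp, hn⟩
  have hheadX1 : ∀ g ∈ GR P X1, g.head ∈ X1 := fun g hg => hA1.closed g hg.1 hg.2.1 hg.2.2
  have hheadX2 : ∀ g ∈ GR P X2, g.head ∈ X2 := fun g hg => hA2.closed g hg.1 hg.2.1 hg.2.2
  have hr1GR : r1 ∈ GR P X1 := by rw [hG1]; exact Set.mem_union_right _ rfl
  have hr2GR2 : r2 ∈ GR P X2 := by rw [hG2]; exact Set.mem_union_right _ rfl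
  have hX2cons : Consistent X2 := by
    rcases hA2.cons_or_univ with h | h
    · exact h
    exfalso
    have hsub : Set.univ ⊆ X1 := by
      rw [← h, ← hA2]
      apply Th_subset (Or.inl hX1cons)
      rintro ρ ⟨g, hgP, hd, rfl⟩ hb
      have hnb : g.nbody = ∅ := by
        rw [Set.eq_empty_iff_forall_notMem]
        intro x hx
        exact hd ⟨x, hx, by rw [h]; trivial⟩
      have hgGR : g ∈ GR P X1 := ⟨hgP, by simp [Defeated, hnb], hb⟩
      exact hheadX1 g hgGR
    exact absurd ((hmemX1 _).1 (hsub (Set.mem_univ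
      (Lit.pos (Sum.inr (nm r1, nm r1)))))).1 (not_precFree_inr _ _)
  have hsup1 : ∀ L ∈ X1, ∃ g ∈ R0 ∪ {r1}, g.head = L := by
    intro L hL
    obtain ⟨g, hg, hd, hb, he⟩ := hA1.supported hX1cons L hL
    exact ⟨g, hG1 ▸ (⟨hg, hd, hb⟩ : g ∈ GR P X1), he⟩
  have hsup2 : ∀ L ∈ X2, ∃ g ∈ R0 ∪ {r2}, g.head = L := by
    intro L hL
    obtain ⟨g, hg, hd, hb, he⟩ := hA2.supported hX2cons L hL
    exact ⟨g, hG2 ▸ (⟨hg, hd, hb⟩ : g ∈ GR P X2), he⟩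
  have hKEY1 : ∀ L ∈ r2.pbody, ∃ g ∈ R0, g.head = L := by
    intro L hL
    have hLX2 : L ∈ X2 := hr2GR2.2.2 hL
    obtain ⟨g, hg, he⟩ := hsup2 L hLX2
    rcases hg with hg | hg
    · exact ⟨g, hg, he⟩
    · rw [Set.mem_singleton_iff] at hg; subst hg
      by_cases hex : ∃ g' ∈ R0, g'.head = g.head
      · obtain ⟨g', hg', he'⟩ := hex
        exact ⟨g', hg', he'.trans he⟩
      · exfalso
        have hV : X2 ⊆ X2 \ {g.head} := by
          apply hA2.min (Or.inl (hX2cons.mono Set.diff_subset))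
          rintro ρ ⟨g', hgP, hd, rfl⟩ hb
          have hbX2 : g'.pbody ⊆ X2 := hb.trans Set.diff_subset
          have hgGR : g' ∈ GR P X2 := ⟨hgP, hd, hbX2⟩
          rw [hG2] at hgGR
          rcases hgGR with hgR | hgr2
          · exact ⟨hheadX2 g' (by rw [hG2]; exact Set.mem_union_left _ hgR),
              fun hc => hex ⟨g', hgR, Set.mem_singleton_iff.1 hc⟩⟩
          · rw [Set.mem_singleton_iff] at hgr2; subst hgr2
            exact absurd rfl (hb (show g'.head ∈ g'.pbody by rw [he]; exact hL)).2
        exact (hV (hheadX2 g hr2GR2)).2 rfl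
  have hpb2 : ∀ L ∈ r2.pbody, L ∈ X1 := by
    intro L hL
    obtain ⟨g, hg, he⟩ := hKEY1 L hL
    exact he ▸ hheadX1 g (by rw [hG1]; exact Set.mem_union_left _ hg)
  have hKEY2 : ∀ L, L ∈ r2.nbody → L ∈ X1 → L = r1.head := by
    intro L hLn hLX1
    obtain ⟨g, hg, he⟩ := hsup1 L hLX1
    rcases hg with hg | hg
    · exfalso
      have hLX2 : L ∈ X2 := he ▸ hheadX2 g (by rw [hG2]; exact Set.mem_union_left _ hg)
      exact hr2GR2.2.1 ⟨L, hLn, hLX2⟩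
    · rw [Set.mem_singleton_iff] at hg; subst hg; exact he.symm
  have hnotGR : r2 ∉ GR P X1 := by
    rw [hG1]
    rintro (h | h)
    · exact h2R h
    · exact hne12 (Set.mem_singleton_iff.1 h).symm
  have hhead1n : r1.head ∈ r2.nbody := by
    by_contra hno
    apply hnotGR
    refine ⟨hr2, ?_, fun L hL => hpb2 L hL⟩
    rintro ⟨L, hLn, hLX1⟩
    exact hno ((hKEY2 L hLn hLX1) ▸ hLn)
  have hKEY3 : ∀ g ∈ R0, g.head ≠ r1.head := by
    intro g hg he
    have hh : r1.head ∈ X2 := he ▸ hheadX2 g (by rw [hG2]; exact Set.mem_union_left _ hg)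
    exact hr2GR2.2.1 ⟨r1.head, hhead1n, hh⟩
  -- Y-side
  set Pi := statProgram P lt nm hinj with hPi
  have hTclosed := hYas.closed
  have hr1m : r1 ∈ Pi.rules := Set.mem_union_left _ hr1
  have hr2m : r2 ∈ Pi.rules := Set.mem_union_left _ hr2
  have hmem_a1 : ∀ g ∈ Pi.rules, a1 nm g ∈ Tsl Pi := fun g hg => ⟨g, hg, Or.inl rfl⟩
  have hmem_a2 : ∀ g ∈ Pi.rules, a2 nm g ∈ Tsl Pi := fun g hg =>
    ⟨g, hg, Or.inr (Or.inl rfl)⟩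
  have hmem_c1 : ∀ g ∈ Pi.rules, c1 Pi.rules nm g ∈ Tsl Pi := fun g hg =>
    ⟨g, hg, Or.inr (Or.inr (Or.inl rfl))⟩
  have hmem_c2 : ∀ g ∈ Pi.rules, ∀ g' ∈ Pi.rules, c2 nm g g' ∈ Tsl Pi :=
    fun g hg g' hg' =>
      ⟨g, hg, Or.inr (Or.inr (Or.inr (Or.inr (Or.inr ⟨g', hg', Or.inl rfl⟩))))⟩
  -- P1 : prec literals in Y come from actual preferences
  have hP1 : ∀ s t : N, Lit.pos (XAtom.prec s t) ∈ Y →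
      ∃ u ∈ P, ∃ u' ∈ P, lt u u' ∧ nm u = s ∧ nm u' = t := by
    have hZ : Y ⊆ Y \ {L : Lit (XAtom α N) | ∃ s t : N,
        L = Lit.pos (XAtom.prec s t) ∧
        ¬ ∃ u ∈ P, ∃ u' ∈ P, lt u u' ∧ nm u = s ∧ nm u' = t} := by
      apply hYas.min (Or.inl (hYcons.mono Set.diff_subset))
      rintro ρ ⟨ρ₀, hρ₀, hnd, rfl⟩ hb
      have hbY : ρ₀.pbody ⊆ Y := hb.trans Set.diff_subset
      refine ⟨hTclosed ρ₀ hρ₀ hnd hbY, ?_⟩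
      rintro ⟨s', t', hhead, hng⟩
      obtain ⟨g, hg, hcase⟩ := hρ₀
      rcases hcase with h | h | h | ⟨L, hL, h⟩ | ⟨L, hL, h⟩ |
        ⟨g', hg', h | h | h | h | ⟨g'', hg'', h⟩⟩ <;> subst h
      · -- a1
        rcases hg with hgP | ⟨u, hu, u', hu', hlu, rfl⟩
        · obtain ⟨a, ha | ha⟩ := (hpf g hgP).1 <;>
            simp [a1, reductRule, ha, embLit, Lit.map, embAtom] at hhead
        · simp only [a1, reductRule, precFact, embLit, Lit.map, embAtom,
            Lit.pos.injEq, XAtom.prec.injEq] at hhead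
          exact hng ⟨u, hu, u', hu', hlu, hhead.1, hhead.2⟩
      · simp [a2, reductRule] at hhead
      · simp [c1, reductRule] at hhead
      · simp [b1, reductRule] at hhead
      · simp [b2, reductRule] at hhead
      · simp [c2, reductRule] at hhead
      · simp [c3, reductRule] at hhead
      · simp [c4, reductRule] at hhead
      · simp [asR, reductRule] at hhead
      · -- trR
        simp only [trR, reductRule, pLit, Lit.pos.injEq, XAtom.prec.injEq] at hhead
        have hb1 := hb (show pLit (nm g) (nm g') ∈ (reductRule (trR nm g g' g'')).pbody
          from Set.mem_insert _ _)
        have hb2 := hb (show pLit (nm g') (nm g'') ∈ (reductRule (trR nm g g' g'')).pbody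
          from Set.mem_insert_of_mem _ rfl)
        have hgood1 : ∃ u ∈ P, ∃ u' ∈ P, lt u u' ∧ nm u = nm g ∧ nm u' = nm g' := by
          by_contra hcon
          exact hb1.2 ⟨nm g, nm g', rfl, hcon⟩
        have hgood2 : ∃ u ∈ P, ∃ u' ∈ P, lt u u' ∧ nm u = nm g' ∧ nm u' = nm g'' := by
          by_contra hcon
          exact hb2.2 ⟨nm g', nm g'', rfl, hcon⟩
        obtain ⟨u, hu, u1, hu1, hl1, hequ, hequ1⟩ := hgood1
        obtain ⟨u2, hu2, u3, hu3, hl2, hequ2, hequ3⟩ := hgood2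
        have hu12 : u1 = u2 := hinj (Set.mem_union_left _ hu1)
          (Set.mem_union_left _ hu2) (hequ1.trans hequ2.symm)
        subst hu12
        exact hng ⟨u, hu, u3, hu3, htr hl1 hl2, hequ.trans hhead.1, hequ3.trans hhead.2⟩
    intro s t hst
    by_contra hcon
    exact (hZ hst).2 ⟨s, t, rfl, hcon⟩
  -- the preference fact and its consequences in Y
  have hFmem : precFact nm r1 r2 ∈ Pi.rules :=
    Set.mem_union_right _ ⟨r1, hr1, r2, hr2, hlt, rfl⟩
  have hfnotP : precFact nm r1 r2 ∉ P := by
    intro hc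
    obtain ⟨a, ha | ha⟩ := (hpf _ hc).1 <;> simp [precFact] at ha
  have hok2f : ∀ g ∈ Pi.rules,
      Lit.pos (XAtom.ok2 (nm (precFact nm r1 r2)) (nm g)) ∈ Y := by
    intro g hg
    apply hTclosed _ (hmem_c2 _ hFmem g hg)
    · rintro ⟨L, hL1, hL2⟩
      rw [show (c2 nm (precFact nm r1 r2) g).nbody =
        {pLit (nm (precFact nm r1 r2)) (nm g)} from rfl,
        Set.mem_singleton_iff] at hL1
      subst hL1
      obtain ⟨u, hu, u', hu', hlu, hequ, _⟩ := hP1 _ _ hL2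
      have : u = precFact nm r1 r2 := hinj (Set.mem_union_left _ hu) hFmem hequ
      exact hfnotP (this ▸ hu)
    · intro L hL
      simp [c2] at hL
  have hokf : Lit.pos (XAtom.ok (nm (precFact nm r1 r2))) ∈ Y := by
    apply hTclosed _ (hmem_c1 _ hFmem)
    · rintro ⟨L, hL1, _⟩
      simp [c1] at hL1
    · rintro L ⟨g, hg, rfl⟩
      exact hok2f g hg
  have hapfY : Lit.pos (XAtom.ap (nm (precFact nm r1 r2))) ∈ Y := by
    apply hTclosed _ (hmem_a2 _ hFmem)
    · rintro ⟨L, hL1, _⟩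
      simp [a2, precFact] at hL1
    · intro L hL
      rcases Set.mem_insert_iff.1 hL with rfl | hL
      · exact hokf
      · simp [precFact] at hL
  have hprec12 : pLit (α := α) (nm r1) (nm r2) ∈ Y := by
    have := hTclosed _ (hmem_a1 _ hFmem) ?_ ?_
    · exact this
    · rintro ⟨L, hL1, _⟩
      simp [a1] at hL1
    · intro L hL
      rw [show (a1 nm (precFact nm r1 r2)).pbody =
        {Lit.pos (XAtom.ap (nm (precFact nm r1 r2)))} from rfl,
        Set.mem_singleton_iff] at hL
      subst hL
      exact hapfY
  -- supportedness of ap atoms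
  have hapGR : ∀ g, g ∈ P → Lit.pos (XAtom.ap (nm g)) ∈ Y → g ∈ GR P X1 := by
    intro g hgP hap
    obtain ⟨ρ₀, hρ₀, hnd, hbY, hhead⟩ := hYas.supported hYcons _ hap
    obtain ⟨g₀, hg₀, hcase⟩ := hρ₀
    rcases hcase with h | h | h | ⟨L, hL, h⟩ | ⟨L, hL, h⟩ |
      ⟨g', hg', h | h | h | h | ⟨g'', hg'', h⟩⟩ <;> subst h
    · exact absurd hhead (embLit_ne_ap _ _)
    · have heq : nm g₀ = nm g := by
        have h' : Pi.nm g₀ = nm g := by simpa [a2] using hhead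
        exact h'
      have hgg : g₀ = g := hinj hg₀ (Set.mem_union_left _ hgP) heq
      subst hgg
      refine ⟨hgP, ?_, ?_⟩
      · rintro ⟨L, hLn, hLX1⟩
        exact hnd ⟨embLit L, ⟨L, hLn, rfl⟩, ((hmemX1 L).1 hLX1).2⟩
      · intro L hL
        exact (hmemX1 L).2 ⟨(hpf g₀ hgP).2.1 L hL,
          hbY (Set.mem_insert_of_mem _ ⟨L, hL, rfl⟩)⟩
    · simp [c1] at hhead
    · simp [b1] at hhead
    · simp [b2] at hhead
    · simp [c2] at hhead
    · simp [c3] at hhead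
    · simp [c4] at hhead
    · simp [asR] at hhead
    · simp [trR, pLit] at hhead
  -- the cycle set B
  obtain ⟨a0, ha0⟩ := (hpf r1 hr1).1
  have hemb1 : embLit r1.head = Lit.pos (XAtom.base a0) ∨
      embLit r1.head = Lit.neg (XAtom.base a0) := by
    rcases ha0 with h | h <;> rw [h]
    · exact Or.inl rfl
    · exact Or.inr rfl
  set B : Set (Lit (XAtom α N)) :=
    {Lit.pos (XAtom.ap (nm r1)), Lit.pos (XAtom.ok (nm r1)),
     Lit.pos (XAtom.ok2 (nm r1) (nm r2)), Lit.pos (XAtom.bl (nm r2)),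
     Lit.pos (XAtom.ap (nm r2)), embLit r1.head} with hB
  have hBap1 : Lit.pos (XAtom.ap (nm r1)) ∈ B := by simp [hB]
  have hBok1 : Lit.pos (XAtom.ok (nm r1)) ∈ B := by simp [hB]
  have hBok2 : Lit.pos (XAtom.ok2 (nm r1) (nm r2)) ∈ B := by simp [hB]
  have hBbl2 : Lit.pos (XAtom.bl (nm r2)) ∈ B := by simp [hB]
  have hBap2 : Lit.pos (XAtom.ap (nm r2)) ∈ B := by simp [hB]
  have hBemb : embLit r1.head ∈ B := by simp [hB]
  have hWclosed : ClosedUnder (Reduct (Tsl Pi) Y) (Y \ B) := by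
    rintro ρ ⟨ρ₀, hρ₀T, hnd, rfl⟩ hb
    have hbY : ρ₀.pbody ⊆ Y := hb.trans Set.diff_subset
    refine ⟨hTclosed ρ₀ hρ₀T hnd hbY, ?_⟩
    intro hBm
    rw [hB] at hBm
    simp only [Set.mem_insert_iff, Set.mem_singleton_iff] at hBm
    obtain ⟨g, hg, hcase⟩ := hρ₀T
    rcases hcase with h | h | h | ⟨L, hL, h⟩ | ⟨L, hL, h⟩ |
      ⟨g', hg', h | h | h | h | ⟨g'', hg'', h⟩⟩ <;> subst h
    · -- a1
      rcases hg with hgP | ⟨u, hu, u', hu', hlu, rfl⟩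
      · rcases hBm with h | h | h | h | h | h
        · exact embLit_ne_ap _ _ h
        · exact embLit_ne_ok _ _ h
        · exact embLit_ne_ok2 _ _ _ h
        · exact embLit_ne_bl _ _ h
        · exact embLit_ne_ap _ _ h
        · have hgh : g.head = r1.head := embLit_injective h
          have hapg := hb (show Lit.pos (XAtom.ap (nm g)) ∈
            (reductRule (a1 nm g)).pbody from rfl)
          have hGR := hapGR g hgP hapg.1
          rw [hG1] at hGR
          rcases hGR with hR | hR
          · exact hKEY3 g hR hgh
          · rw [Set.mem_singleton_iff] at hR; subst hR
            exact hapg.2 hBap1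
      · rw [show (reductRule (a1 Pi.nm (precFact nm u u'))).head =
            Lit.pos (XAtom.prec (nm u) (nm u')) from rfl] at hBm
        rcases hBm with h | h | h | h | h | h
        · simp at h
        · simp at h
        · simp at h
        · simp at h
        · simp at h
        · rcases hemb1 with h1 | h1 <;> rw [h1] at h <;> simp at h
    · -- a2
      rw [show (reductRule (a2 Pi.nm g)).head = Lit.pos (XAtom.ap (nm g)) from rfl] at hBm
      rcases hBm with h | h | h | h | h | h
      · have hgg : g = r1 := hinj hg hr1m (by simpa using h)
        subst hgg
        have hok := hb (show Lit.pos (XAtom.ok (nm g)) ∈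
          (reductRule (a2 nm g)).pbody from Set.mem_insert _ _)
        exact hok.2 hBok1
      · simp at h
      · simp at h
      · simp at h
      · have hgg : g = r2 := hinj hg hr2m (by simpa using h)
        subst hgg
        apply hnotGR
        refine ⟨hr2, ?_, fun L hL => hpb2 L hL⟩
        rintro ⟨L, hLn, hLX1⟩
        exact hnd ⟨embLit L, ⟨L, hLn, rfl⟩, ((hmemX1 L).1 hLX1).2⟩
      · exact embLit_ne_ap _ _ h.symm
    · -- c1
      rw [show (reductRule (c1 Pi.rules Pi.nm g)).head =
        Lit.pos (XAtom.ok (nm g)) from rfl] at hBm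
      rcases hBm with h | h | h | h | h | h
      · simp at h
      · have hgg : g = r1 := hinj hg hr1m (by simpa using h)
        subst hgg
        have hmem2 : Lit.pos (XAtom.ok2 (nm g) (nm r2)) ∈
            (reductRule (c1 Pi.rules nm g)).pbody := ⟨r2, hr2m, rfl⟩
        exact (hb hmem2).2 hBok2
      · simp at h
      · simp at h
      · simp at h
      · exact embLit_ne_ok _ _ h.symm
    · -- b1
      rw [show (reductRule (b1 Pi.nm g L)).head = Lit.pos (XAtom.bl (nm g)) from rfl] at hBm
      rcases hBm with h | h | h | h | h | h
      · simp at h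
      · simp at h
      · simp at h
      · have hgg : g = r2 := hinj hg hr2m (by simpa using h)
        subst hgg
        exact hnd ⟨embLit L, rfl, ((hmemX1 L).1 (hpb2 L hL)).2⟩
      · simp at h
      · exact embLit_ne_bl _ _ h.symm
    · -- b2
      rw [show (reductRule (b2 Pi.nm g L)).head = Lit.pos (XAtom.bl (nm g)) from rfl] at hBm
      rcases hBm with h | h | h | h | h | h
      · simp at h
      · simp at h
      · simp at h
      · have hgg : g = r2 := hinj hg hr2m (by simpa using h)
        subst hgg
        have hbe := hb (show embLit L ∈ (reductRule (b2 nm g L)).pbody from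
          Set.mem_insert_of_mem _ rfl)
        have hLX1 : L ∈ X1 := (hmemX1 L).2 ⟨(hpf g hr2).2.2 L hL, hbe.1⟩
        have hLh : L = r1.head := hKEY2 L hL hLX1
        exact hbe.2 (by rw [hLh]; exact hBemb)
      · simp at h
      · exact embLit_ne_bl _ _ h.symm
    · -- c2
      rw [show (reductRule (c2 Pi.nm g g')).head =
        Lit.pos (XAtom.ok2 (nm g) (nm g')) from rfl] at hBm
      rcases hBm with h | h | h | h | h | h
      · simp at h
      · simp at h
      · obtain ⟨e1, e2⟩ : nm g = nm r1 ∧ nm g' = nm r2 := by simpa using h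
        have hgg : g = r1 := hinj hg hr1m e1
        have hgg' : g' = r2 := hinj hg' hr2m e2
        subst hgg; subst hgg'
        exact hnd ⟨pLit (nm g) (nm g'), rfl, hprec12⟩
      · simp at h
      · simp at h
      · exact embLit_ne_ok2 _ _ _ h.symm
    · -- c3
      rw [show (reductRule (c3 Pi.nm g g')).head =
        Lit.pos (XAtom.ok2 (nm g) (nm g')) from rfl] at hBm
      rcases hBm with h | h | h | h | h | h
      · simp at h
      · simp at h
      · obtain ⟨e1, e2⟩ : nm g = nm r1 ∧ nm g' = nm r2 := by simpa using h
        have hgg' : g' = r2 := hinj hg' hr2m e2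
        subst hgg'
        have hapg := hb (show Lit.pos (XAtom.ap (nm g')) ∈
          (reductRule (c3 nm g g')).pbody from Set.mem_insert_of_mem _ rfl)
        exact hapg.2 hBap2
      · simp at h
      · simp at h
      · exact embLit_ne_ok2 _ _ _ h.symm
    · -- c4
      rw [show (reductRule (c4 Pi.nm g g')).head =
        Lit.pos (XAtom.ok2 (nm g) (nm g')) from rfl] at hBm
      rcases hBm with h | h | h | h | h | h
      · simp at h
      · simp at h
      · obtain ⟨e1, e2⟩ : nm g = nm r1 ∧ nm g' = nm r2 := by simpa using h
        have hgg' : g' = r2 := hinj hg' hr2m e2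
        subst hgg'
        have hblg := hb (show Lit.pos (XAtom.bl (nm g')) ∈
          (reductRule (c4 nm g g')).pbody from Set.mem_insert_of_mem _ rfl)
        exact hblg.2 hBbl2
      · simp at h
      · simp at h
      · exact embLit_ne_ok2 _ _ _ h.symm
    · -- asR
      rw [show (reductRule (asR Pi.nm g g')).head =
        Lit.neg (XAtom.prec (nm g') (nm g)) from rfl] at hBm
      rcases hBm with h | h | h | h | h | h
      · simp at h
      · simp at h
      · simp at h
      · simp at h
      · simp at h
      · rcases hemb1 with h1 | h1 <;> rw [h1] at h <;> simp at h
    · -- trR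
      rw [show (reductRule (trR Pi.nm g g' g'')).head =
        Lit.pos (XAtom.prec (nm g) (nm g'')) from rfl] at hBm
      rcases hBm with h | h | h | h | h | h
      · simp at h
      · simp at h
      · simp at h
      · simp at h
      · simp at h
      · rcases hemb1 with h1 | h1 <;> rw [h1] at h <;> simp at h
  have hYW : Y ⊆ Y \ B := hYas.min (Or.inl (hYcons.mono Set.diff_subset)) hWclosed
  have hhY : embLit r1.head ∈ Y := ((hmemX1 _).1 (hheadX1 r1 hr1GR)).2
  exact (hYW hhY).2 hBemb
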